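/- Let N ≥ 1 be an integer, put β₀ = γ₀ = √(2N), and let q, p, u, w : (0,∞) → ℝ be differentiable functions satisfying for all s > 0: q′ = −s q + (β₀ − 2u) p + 2q²p/s, p′ = s p − (γ₀ + 2w) q − 2q p²/s, u′ = −2q², w′ = −2p², together with the first-integral relation β₀γ₀ − 4pq = (β₀ − 2u)(γ₀ + 2w). Define R̃(s) = −q(s)p(s)/s. Then R̃ is twice differentiable and satisfies for all s > 0 the equation [s R̃″ + 2 R̃′ + 8N s R̃ + 24 s² R̃²]² = 4 (s + 2R̃)² [(R̃ + s R̃′)² + 8N s² R̃² + 16 s³ R̃³]. -/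

import Mathlib

/-- Proposition 3 of the paper (finite-`N` GUE coupled system with
`β₀ = γ₀ = √(2N)`) together with the first integral (3.10) implies that
`R̃(s) = −q(s)p(s)/s` satisfies the second-order second-degree equation (3.15). -/
theorem gue_Rtilde_from_coupled_system (N : ℕ) (hN : 1 ≤ N)
    (β₀ γ₀ : ℝ) (hβ₀ : β₀ = Real.sqrt (2 * N)) (hγ₀ : γ₀ = Real.sqrt (2 * N))
    (q p u w : ℝ → ℝ)
    (hq : ∀ s > (0:ℝ), DifferentiableAt ℝ q s)
    (hp : ∀ s > (0:ℝ), DifferentiableAt ℝ p s)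
    (hu : ∀ s > (0:ℝ), DifferentiableAt ℝ u s)
    (hw : ∀ s > (0:ℝ), DifferentiableAt ℝ w s)
    (hq' : ∀ s > (0:ℝ), deriv q s =
      -s * q s + (β₀ - 2 * u s) * p s + 2 * (q s) ^ 2 * p s / s)
    (hp' : ∀ s > (0:ℝ), deriv p s =
      s * p s - (γ₀ + 2 * w s) * q s - 2 * q s * (p s) ^ 2 / s)
    (hu' : ∀ s > (0:ℝ), deriv u s = -2 * (q s) ^ 2)
    (hw' : ∀ s > (0:ℝ), deriv w s = -2 * (p s) ^ 2)
    (hint : ∀ s > (0:ℝ),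
      β₀ * γ₀ - 4 * p s * q s = (β₀ - 2 * u s) * (γ₀ + 2 * w s)) :
    ∀ s > (0:ℝ),
      DifferentiableAt ℝ (fun t => -(q t * p t) / t) s ∧
      DifferentiableAt ℝ (deriv (fun t => -(q t * p t) / t)) s ∧
      (s * deriv (deriv (fun t => -(q t * p t) / t)) s
          + 2 * deriv (fun t => -(q t * p t) / t) s
          + 8 * N * s * (-(q s * p s) / s)
          + 24 * s ^ 2 * (-(q s * p s) / s) ^ 2) ^ 2 =
        4 * (s + 2 * (-(q s * p s) / s)) ^ 2 *
          ((-(q s * p s) / s + s * deriv (fun t => -(q t * p t) / t) s) ^ 2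
            + 8 * N * s ^ 2 * (-(q s * p s) / s) ^ 2
            + 16 * s ^ 3 * (-(q s * p s) / s) ^ 3) := by
  -- the explicit formula for the first derivative of R̃
  set G : ℝ → ℝ := fun t =>
    (((γ₀ + 2 * w t) * (q t) ^ 2 - (β₀ - 2 * u t) * (p t) ^ 2) * t + q t * p t) / t ^ 2
    with hGdef
  have hRderiv : ∀ t > (0:ℝ), HasDerivAt (fun t => -(q t * p t) / t)
      ((-(deriv q t * p t + q t * deriv p t) * t - -(q t * p t) * 1) / t ^ 2) t := by
    intro t ht
    exact (((hq t ht).hasDerivAt.mul (hp t ht).hasDerivAt).neg.div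
      (hasDerivAt_id t) (ne_of_gt ht))
  have hRG : ∀ t > (0:ℝ), deriv (fun t => -(q t * p t) / t) t = G t := by
    intro t ht
    rw [(hRderiv t ht).deriv, hq' t ht, hp' t ht, hGdef]
    have ht0 : t ≠ 0 := ne_of_gt ht
    field_simp
    ring
  intro s hs
  have hs0 : s ≠ 0 := ne_of_gt hs
  have heq : deriv (fun t => -(q t * p t) / t) =ᶠ[nhds s] G :=
    Filter.eventuallyEq_of_mem (isOpen_Ioi.mem_nhds hs) (fun t ht => hRG t ht)
  -- derivative of G at s
  have h1 : HasDerivAt (fun t => γ₀ + 2 * w t) (2 * deriv w s) s :=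
    (((hw s hs).hasDerivAt.const_mul 2).const_add γ₀)
  have h3 : HasDerivAt (fun t => β₀ - 2 * u t) (-(2 * deriv u s)) s :=
    (((hu s hs).hasDerivAt.const_mul 2).const_sub β₀)
  have hq2 : HasDerivAt (fun t => (q t) ^ 2) (2 * q s ^ 1 * deriv q s) s := by
    simpa using (hq s hs).hasDerivAt.fun_pow 2
  have hp2 : HasDerivAt (fun t => (p t) ^ 2) (2 * p s ^ 1 * deriv p s) s := by
    simpa using (hp s hs).hasDerivAt.fun_pow 2
  have hqp : HasDerivAt (fun t => q t * p t)
      (deriv q s * p s + q s * deriv p s) s :=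
    (hq s hs).hasDerivAt.mul (hp s hs).hasDerivAt
  have hs2 : HasDerivAt (fun t : ℝ => t ^ 2) ((2:ℕ) * s ^ 1) s := by
    simpa using hasDerivAt_pow 2 s
  have hGd := ((((h1.fun_mul hq2).fun_sub (h3.fun_mul hp2)).fun_mul (hasDerivAt_id s)).fun_add hqp).fun_div
    hs2 (pow_ne_zero 2 hs0)
  have hGdiff : DifferentiableAt ℝ G s := hGd.differentiableAt
  refine ⟨(hRderiv s hs).differentiableAt, ?_, ?_⟩
  · exact (Filter.EventuallyEq.differentiableAt_iff heq).mpr hGdiff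
  · simp only [id_eq] at hGd
    rw [heq.deriv_eq, hGdef] 
    rw [hGd.deriv, hRG s hs, hGdef]
    rw [hq' s hs, hp' s hs, hu' s hs, hw' s hs]
    have h2N : β₀ * γ₀ = 2 * N := by
      rw [hβ₀, hγ₀]
      exact Real.mul_self_sqrt (by positivity)
    have hNval : (N : ℝ) =
        ((β₀ - 2 * u s) * (γ₀ + 2 * w s) + 4 * p s * q s) / 2 := by
      have := hint s hs
      rw [h2N] at this
      linarith
    rw [hNval]
    field_simp
    ring
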